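/- Fix an integer n ≥ 1 and reals a, x, μ, ρ with a > 0, x ≥ 0, μ ≥ 0, ρ > 0. With c_i, D, f and λ^Cap as defined in the context, for every ψ ∈ (0,1] with D(ψ) ≠ 0 the function λ^Cap is differentiable at ψ with derivative λ^Cap′(ψ) = −e^{−μ/ρ}·ψ^{−1/(1+μ)}·f(ψ) / D(ψ)². -/

import Mathlib

open Finset

/-- `c_i = (1 − e^{−μ/ρ}/(1+μ)^{i−1})^i`. -/
noncomputable def cCap (μ ρ : ℝ) (i : ℕ) : ℝ :=
  (1 - Real.exp (-(μ / ρ)) / (1 + μ) ^ (i - 1)) ^ i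

/-- The denominator of the capture-model throughput (equation (13) of the paper). -/
noncomputable def DCap (n : ℕ) (a x μ ρ : ℝ) (ψ : ℝ) : ℝ :=
  1 + a - ψ - (1 - a * x) *
    ∑ i ∈ Finset.Icc 1 n, cCap μ ρ i * (n.choose i : ℝ) *
      (-Real.log ψ / n) ^ i * (1 + Real.log ψ / n) ^ (n - i)

/-- The capture-model network throughput as a function of `ψ`. -/
noncomputable def lamCap (n : ℕ) (a x μ ρ : ℝ) (ψ : ℝ) : ℝ :=
  -Real.exp (-(μ / ρ)) * ψ ^ (μ / (1 + μ)) * Real.log ψ / DCap n a x μ ρ ψ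

/-- The function `f` of equation (22) of the paper (capture model), with the `i = n`
summand written out explicitly. -/
noncomputable def fCap (n : ℕ) (a x μ ρ : ℝ) (ψ : ℝ) : ℝ :=
  (μ / (1 + μ) * Real.log ψ + 1) * (1 + a - ψ) + ψ * Real.log ψ -
    (1 - a * x) *
      ((∑ i ∈ Finset.Icc 1 (n - 1), cCap μ ρ i * (n.choose i : ℝ) *
          (-Real.log ψ / n) ^ i *
          ((μ / (1 + μ) * Real.log ψ + 1) * (1 + Real.log ψ / n) ^ (n - i) -
            ((i : ℝ) + Real.log ψ) * (1 + Real.log ψ / n) ^ (n - i - 1))) +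
        cCap μ ρ n * (-Real.log ψ / n) ^ n * (μ / (1 + μ) * Real.log ψ + 1 - (n : ℝ)))

/-- The derivative formula (21) in the proof of Theorem 2 of the paper. -/
theorem csma_lamCap_hasDerivAt
    (n : ℕ) (hn : 1 ≤ n) (a x μ ρ : ℝ)
    (ha : 0 < a) (hx : 0 ≤ x) (hμ : 0 ≤ μ) (hρ : 0 < ρ)
    (ψ : ℝ) (hψ : ψ ∈ Set.Ioc (0 : ℝ) 1) (hD : DCap n a x μ ρ ψ ≠ 0) :
    HasDerivAt (lamCap n a x μ ρ)
      (-Real.exp (-(μ / ρ)) * ψ ^ (-(1 / (1 + μ))) * fCap n a x μ ρ ψ /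
        (DCap n a x μ ρ ψ) ^ 2) ψ := by
  obtain ⟨m, rfl⟩ : ∃ m, n = m + 1 := ⟨n - 1, (Nat.succ_pred_eq_of_pos hn).symm⟩
  have hψ0 : (0:ℝ) < ψ := hψ.1
  have hψne : ψ ≠ 0 := hψ0.ne'
  have h1μ : (0:ℝ) < 1 + μ := by linarith
  have hn0 : ((m+1 : ℕ) : ℝ) ≠ 0 := Nat.cast_ne_zero.mpr (by omega)
  have hlog : HasDerivAt Real.log ψ⁻¹ ψ := Real.hasDerivAt_log hψne
  set d : ℕ → ℝ := fun i =>
    cCap μ ρ i * (((m+1).choose i : ℕ) : ℝ) *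
      ((i:ℝ) * (-Real.log ψ / (m+1:ℕ)) ^ (i-1) * (-ψ⁻¹ / (m+1:ℕ)) *
          (1 + Real.log ψ / (m+1:ℕ)) ^ (m+1-i) +
        (-Real.log ψ / (m+1:ℕ)) ^ i *
          ((↑(m+1-i):ℝ) * (1 + Real.log ψ / (m+1:ℕ)) ^ (m+1-i-1) * (ψ⁻¹ / (m+1:ℕ)))) with hd
  have hterm : ∀ i ∈ Finset.Icc 1 (m+1), HasDerivAt
      (fun t => cCap μ ρ i * (((m+1).choose i : ℕ) : ℝ) *
        (-Real.log t / (m+1:ℕ)) ^ i * (1 + Real.log t / (m+1:ℕ)) ^ (m+1-i)) (d i) ψ := by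
    intro i _
    have h1 := ((hlog.neg.div_const ((m+1:ℕ):ℝ)).pow i)
    have h2 := (((hlog.div_const ((m+1:ℕ):ℝ)).const_add 1).pow (m+1-i))
    have h := (h1.mul h2).const_mul (cCap μ ρ i * (((m+1).choose i : ℕ) : ℝ))
    convert h using 1
    · rfl
    · rfl
    · funext t; simp only [Pi.mul_apply, Pi.pow_apply, Pi.neg_apply]; ring
    · rfl
  have hS := HasDerivAt.fun_sum hterm
  have hDder : HasDerivAt (DCap (m+1) a x μ ρ)
      (-1 - (1 - a * x) * ∑ i ∈ Finset.Icc 1 (m+1), d i) ψ := by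
    have h := ((hasDerivAt_id ψ).const_sub (1 + a)).sub (hS.const_mul (1 - a * x))
    convert h using 1
    · rfl
    · rfl
    · funext t; simp only [DCap, Pi.sub_apply, id]
  have hrp : HasDerivAt (fun t : ℝ => t ^ (μ/(1+μ))) ((μ/(1+μ)) * ψ ^ (μ/(1+μ) - 1)) ψ :=
    Real.hasDerivAt_rpow_const (Or.inl hψne)
  have hNum := (hrp.const_mul (-Real.exp (-(μ / ρ)))).mul hlog
  have hmain := hNum.div hDder hD
  have hfun : lamCap (m+1) a x μ ρ
      = fun t => (-Real.exp (-(μ / ρ)) * t ^ (μ/(1+μ)) * Real.log t) / DCap (m+1) a x μ ρ t := rfl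
  rw [hfun]
  -- key summation identity
  have hkey : ∑ i ∈ Finset.Icc 1 (m+1),
      ((μ/(1+μ) * Real.log ψ + 1) * (cCap μ ρ i * (((m+1).choose i : ℕ) : ℝ) *
        (-Real.log ψ / (m+1:ℕ)) ^ i * (1 + Real.log ψ / (m+1:ℕ)) ^ (m+1-i))
        - (ψ * Real.log ψ) * d i) =
      (∑ i ∈ Finset.Icc 1 m, cCap μ ρ i * (((m+1).choose i : ℕ) : ℝ) *
          (-Real.log ψ / (m+1:ℕ)) ^ i *
          ((μ/(1+μ) * Real.log ψ + 1) * (1 + Real.log ψ / (m+1:ℕ)) ^ (m+1-i) -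
            ((i : ℝ) + Real.log ψ) * (1 + Real.log ψ / (m+1:ℕ)) ^ (m+1-i-1))) +
        cCap μ ρ (m+1) * (-Real.log ψ / (m+1:ℕ)) ^ (m+1) *
          (μ/(1+μ) * Real.log ψ + 1 - ((m+1:ℕ) : ℝ)) := by
    rw [Finset.sum_Icc_succ_top (Nat.le_add_left 1 m)]
    congr 1
    · refine Finset.sum_congr rfl fun i hi => ?_
      simp only [Finset.mem_Icc] at hi
      obtain ⟨hi1, hi2⟩ := hi
      simp only [hd]
      have e1 : (-Real.log ψ / ((m+1:ℕ):ℝ)) ^ i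
          = (-Real.log ψ / ((m+1:ℕ):ℝ)) ^ (i-1) * (-Real.log ψ / ((m+1:ℕ):ℝ)) := by
        conv_lhs => rw [show i = (i-1)+1 by omega]
        rw [pow_succ]
      have e2 : (1 + Real.log ψ / ((m+1:ℕ):ℝ)) ^ (m+1-i)
          = (1 + Real.log ψ / ((m+1:ℕ):ℝ)) ^ (m+1-i-1) * (1 + Real.log ψ / ((m+1:ℕ):ℝ)) := by
        conv_lhs => rw [show m+1-i = (m+1-i-1)+1 by omega]
        rw [pow_succ]
      rw [e1, e2, Nat.cast_sub (by omega : i ≤ m+1)]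
      field_simp
      ring
    · simp only [hd, Nat.choose_self, Nat.cast_one, Nat.sub_self, Nat.cast_zero, pow_zero]
      have e1 : (-Real.log ψ / ((m+1:ℕ):ℝ)) ^ (m+1)
          = (-Real.log ψ / ((m+1:ℕ):ℝ)) ^ m * (-Real.log ψ / ((m+1:ℕ):ℝ)) := pow_succ _ _
      rw [e1]
      field_simp
      simp only [Nat.add_sub_cancel]
      ring
  rw [Finset.sum_sub_distrib, ← Finset.mul_sum, ← Finset.mul_sum] at hkey
  convert hmain using 1
  · rfl
  · rfl
  · rfl
  rw [show (-(1 / (1 + μ))) = μ/(1+μ) - 1 by field_simp; ring]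
  have hpow : ψ ^ (μ/(1+μ)) = ψ ^ (μ/(1+μ) - 1) * ψ := by
    rw [Real.rpow_sub hψ0, Real.rpow_one, div_mul_cancel₀ _ hψne]
  rw [hpow]
  congr 1
  simp only [fCap, DCap, Nat.add_sub_cancel, Pi.mul_apply, hpow]
  have hinv : ψ * ψ⁻¹ = 1 := mul_inv_cancel₀ hψne
  linear_combination
    (-(Real.exp (-(μ/ρ)) * ψ ^ (μ/(1+μ) - 1) * (1 - a*x))) * hkey +
    (Real.exp (-(μ/ρ)) * ψ ^ (μ/(1+μ) - 1) *
      (1 + a - ψ - (1 - a * x) *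
        ∑ i ∈ Finset.Icc 1 (m+1), cCap μ ρ i * (((m+1).choose i : ℕ) : ℝ) *
          (-Real.log ψ / (m+1:ℕ)) ^ i * (1 + Real.log ψ / (m+1:ℕ)) ^ (m+1-i))) * hinv
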